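/- Let π ∈ S_n and let Γ(π) = (d,l). Then π avoids the classical pattern 132 if and only if l = (0,0,…,0). -/

import Mathlib

open scoped Classical

noncomputable section

/-- Steps of a Motzkin path: up, down, horizontal. -/
inductive Step : Type
  | U : Step
  | D : Step
  | H : Step
  deriving DecidableEq

/-- Steps of a bicolored Motzkin path: up, down, horizontal of color `c₁`,
horizontal of color `c₂`. -/
inductive CStep : Type
  | U : CStep
  | D : CStep
  | H : CStep
  | Ht : CStep
  deriving DecidableEq

/-- A word over `{U,D,H}` is a Motzkin word if the numbers of `U`'s and `D`'s agree
and every prefix has at least as many `U`'s as `D`'s. -/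
def IsMotzkin (w : List Step) : Prop :=
  w.count Step.U = w.count Step.D ∧
  ∀ k, (w.take k).count Step.D ≤ (w.take k).count Step.U

/-- The `y`-coordinate of the lattice point reached after the first `i` steps. -/
def levelAt (w : List Step) (i : ℕ) : ℕ :=
  (w.take i).count Step.U - (w.take i).count Step.D

/-- The height of the `i`-th step (0-indexed): the `y`-coordinate of its ending
point for a down step, of its starting point otherwise. -/
def heightAt (w : List Step) (i : ℕ) : ℕ :=
  if w.getD i Step.H = Step.D then levelAt w (i + 1) else levelAt w i

/-- Twice the area between the path and the `x`-axis (trapezoid rule). -/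
def twoArea (w : List Step) : ℕ :=
  ∑ i ∈ Finset.range w.length, (levelAt w i + levelAt w (i + 1))

/-- The number of occurrences of `p` as a factor (subword of consecutive letters) of `w`. -/
def occFactor (p w : List Step) : ℕ :=
  ((Finset.range w.length).filter fun i => p <+: w.drop i).card

/-- The `y`-coordinate reached after `i` steps, bicolored version. -/
def cLevelAt (w : List CStep) (i : ℕ) : ℕ :=
  (w.take i).count CStep.U - (w.take i).count CStep.D

/-- The height of the `i`-th step, bicolored version. -/
def cHeightAt (w : List CStep) (i : ℕ) : ℕ :=
  if w.getD i CStep.H = CStep.D then cLevelAt w (i + 1) else cLevelAt w i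

/-- A bicolored Motzkin word: a Motzkin word whose horizontal steps have two possible
colors (`H` and `Ht`), horizontal steps at height `0` not being allowed to have the
second color. -/
def IsBicoloredMotzkin (w : List CStep) : Prop :=
  w.count CStep.U = w.count CStep.D ∧
  (∀ k, (w.take k).count CStep.D ≤ (w.take k).count CStep.U) ∧
  (∀ i < w.length, w.getD i CStep.H = CStep.Ht → cHeightAt w i ≠ 0)

/-- A histoire de Laguerre of length `n`: a bicolored Motzkin path of length `n`
together with a sequence `l` of nonnegative integers such that `l i ≤ h i` for each
step, the inequality being strict for the horizontal steps of the second color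
(the "suitable constraints" of De Medicis and Viennot). -/
def IsLaguerre (n : ℕ) (dl : List CStep × List ℕ) : Prop :=
  dl.1.length = n ∧ dl.2.length = n ∧ IsBicoloredMotzkin dl.1 ∧
  ∀ i < n, dl.2.getD i 0 ≤ cHeightAt dl.1 i ∧
    (dl.1.getD i CStep.H = CStep.Ht → dl.2.getD i 0 < cHeightAt dl.1 i)

/-- A labelled Motzkin path of length `n`: a Motzkin path whose down steps carry a
label not exceeding their height, all other steps carrying the label `0` (unlabelled). -/
def IsLabelledMotzkin (n : ℕ) (dl : List Step × List ℕ) : Prop :=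
  dl.1.length = n ∧ dl.2.length = n ∧ IsMotzkin dl.1 ∧
  ∀ i < n, (dl.1.getD i Step.H = Step.D → dl.2.getD i 0 ≤ heightAt dl.1 i) ∧
    (dl.1.getD i Step.H ≠ Step.D → dl.2.getD i 0 = 0)

/-- The embedding of plain Motzkin steps into bicolored steps. -/
def Step.toC : Step → CStep
  | Step.U => CStep.U
  | Step.D => CStep.D
  | Step.H => CStep.H

/-- The value (as a natural number, 0-indexed) of the permutation `π` at the
(0-indexed) position `i`; junk value `0` out of range. -/
def pv {n : ℕ} (π : Equiv.Perm (Fin n)) (i : ℕ) : ℕ :=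
  if h : i < n then (π ⟨i, h⟩ : Fin n).val else 0

/-- Position `p` starts an ascending run of `π` (in one-line notation):
either `p = 0` or there is a descent just before `p`. -/
def RunStartAt {n : ℕ} (π : Equiv.Perm (Fin n)) (p : Fin n) : Prop :=
  ∀ q : Fin n, (q : ℕ) + 1 = (p : ℕ) → π p < π q

/-- Position `p` ends an ascending run of `π`. -/
def RunEndAt {n : ℕ} (π : Equiv.Perm (Fin n)) (p : Fin n) : Prop :=
  ∀ q : Fin n, (p : ℕ) + 1 = (q : ℕ) → π q < π p

/-- The step of the bicolored Motzkin path `Γ(π)` associated with the value `v`: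
`U` if `v` is a head, `D` if it is a tail, `H` if it is a head-tail, `Ht` if it
is a boarder. -/
def gammaStep {n : ℕ} (π : Equiv.Perm (Fin n)) (v : Fin n) : CStep :=
  if RunStartAt π (π.symm v) then
    if RunEndAt π (π.symm v) then CStep.H else CStep.U
  else
    if RunEndAt π (π.symm v) then CStep.D else CStep.Ht

/-- The label of `Γ(π)` at the value `v`: the number of ascending runs of `π`
(determined by the position `pq.1` of their first element and the position `pq.2`
of their last element) whose first value is `< v`, whose last value is `> v`, and
whose last element precedes `v` in `π`. -/
def gammaLabel {n : ℕ} (π : Equiv.Perm (Fin n)) (v : Fin n) : ℕ :=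
  (Finset.univ.filter fun pq : Fin n × Fin n =>
    RunStartAt π pq.1 ∧ RunEndAt π pq.2 ∧ pq.1 ≤ pq.2 ∧
    (∀ r : Fin n, pq.1 ≤ r → r < pq.2 → ¬ RunEndAt π r) ∧
    π pq.1 < v ∧ v < π pq.2 ∧ pq.2 < π.symm v).card

/-- The map `Γ` from permutations to pairs (bicolored Motzkin path, label sequence). -/
def Gamma {n : ℕ} (π : Equiv.Perm (Fin n)) : List CStep × List ℕ :=
  (List.ofFn fun v => gammaStep π v, List.ofFn fun v => gammaLabel π v)

/-- The (uncolored) Motzkin path `Γ(π)` for permutations with no boarders: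
`U` for heads, `D` for tails, `H` for head-tails. -/
def gammaPath {n : ℕ} (π : Equiv.Perm (Fin n)) : List Step :=
  List.ofFn fun v : Fin n =>
    if RunStartAt π (π.symm v) then
      if RunEndAt π (π.symm v) then Step.H else Step.U
    else
      if RunEndAt π (π.symm v) then Step.D else Step.H

/-- `π` is an involution. -/
def IsInvolution {n : ℕ} (π : Equiv.Perm (Fin n)) : Prop :=
  ∀ x, π (π x) = x

/-- The Motzkin path `Ψ(π)` of an involution `π`: `H` at fixed points, `U` at the
smaller element of a 2-cycle, `D` at the larger element of a 2-cycle. -/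
def psiWord {n : ℕ} (π : Equiv.Perm (Fin n)) : List Step :=
  List.ofFn fun v : Fin n =>
    if π v = v then Step.H else if v < π v then Step.U else Step.D

/-- The label of `Ψ(π)` at `v`: if `v` is the larger element of a 2-cycle
`(π v, v)`, the number of 2-cycles `(x, π x)` with `π v < x < v < π x`; `0` otherwise. -/
def psiLabel {n : ℕ} (π : Equiv.Perm (Fin n)) (v : Fin n) : ℕ :=
  if π v < v then
    (Finset.univ.filter fun x : Fin n => π v < x ∧ x < v ∧ v < π x).card
  else 0

/-- The map `Ψ` from involutions to labelled Motzkin paths. -/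
def Psi {n : ℕ} (π : Equiv.Perm (Fin n)) : List Step × List ℕ :=
  (psiWord π, List.ofFn fun v => psiLabel π v)

/-- Number of inversions of `π`. -/
def invCount {n : ℕ} (π : Equiv.Perm (Fin n)) : ℕ :=
  (Finset.univ.filter fun p : Fin n × Fin n => p.1 < p.2 ∧ π p.2 < π p.1).card

/-- Number of coinversions of `π`. -/
def coinvCount {n : ℕ} (π : Equiv.Perm (Fin n)) : ℕ :=
  (Finset.univ.filter fun p : Fin n × Fin n => p.1 < p.2 ∧ π p.1 < π p.2).card

/-- Number of descents of `π`. -/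
def desCount {n : ℕ} (π : Equiv.Perm (Fin n)) : ℕ :=
  ((Finset.range (n - 1)).filter fun i => pv π (i + 1) < pv π i).card

/-- Number of ascents of `π`. -/
def ascCount {n : ℕ} (π : Equiv.Perm (Fin n)) : ℕ :=
  ((Finset.range (n - 1)).filter fun i => pv π i < pv π (i + 1)).card

/-- Number of fixed points of `π`. -/
def fixCount {n : ℕ} (π : Equiv.Perm (Fin n)) : ℕ :=
  (Finset.univ.filter fun i : Fin n => π i = i).card

/-- Number of occurrences of the consecutive pattern 123 in `π`. -/
def occC123 {n : ℕ} (π : Equiv.Perm (Fin n)) : ℕ :=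
  ((Finset.range (n - 2)).filter fun i =>
    pv π i < pv π (i + 1) ∧ pv π (i + 1) < pv π (i + 2)).card

/-- Number of occurrences of the consecutive pattern 132 in `π`. -/
def occC132 {n : ℕ} (π : Equiv.Perm (Fin n)) : ℕ :=
  ((Finset.range (n - 2)).filter fun i =>
    pv π i < pv π (i + 2) ∧ pv π (i + 2) < pv π (i + 1)).card

/-- Number of occurrences of the consecutive pattern 213 in `π`. -/
def occC213 {n : ℕ} (π : Equiv.Perm (Fin n)) : ℕ :=
  ((Finset.range (n - 2)).filter fun i =>
    pv π (i + 1) < pv π i ∧ pv π i < pv π (i + 2)).card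

/-- Number of occurrences of the consecutive pattern 231 in `π`. -/
def occC231 {n : ℕ} (π : Equiv.Perm (Fin n)) : ℕ :=
  ((Finset.range (n - 2)).filter fun i =>
    pv π (i + 2) < pv π i ∧ pv π i < pv π (i + 1)).card

/-- Number of occurrences of the consecutive pattern 312 in `π`. -/
def occC312 {n : ℕ} (π : Equiv.Perm (Fin n)) : ℕ :=
  ((Finset.range (n - 2)).filter fun i =>
    pv π (i + 1) < pv π (i + 2) ∧ pv π (i + 2) < pv π i).card

/-- Number of occurrences of the consecutive pattern 321 in `π`. -/
def occC321 {n : ℕ} (π : Equiv.Perm (Fin n)) : ℕ :=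
  ((Finset.range (n - 2)).filter fun i =>
    pv π (i + 2) < pv π (i + 1) ∧ pv π (i + 1) < pv π i).card

/-- `π` contains the classical pattern 132. -/
def Contains132 {n : ℕ} (π : Equiv.Perm (Fin n)) : Prop :=
  ∃ i j k : Fin n, i < j ∧ j < k ∧ π i < π k ∧ π k < π j

/-- `π` contains the consecutive pattern 123. -/
def ContainsC123 {n : ℕ} (π : Equiv.Perm (Fin n)) : Prop :=
  ∃ i j k : Fin n, (i : ℕ) + 1 = (j : ℕ) ∧ (j : ℕ) + 1 = (k : ℕ) ∧ π i < π j ∧ π j < π k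

/-- `π` contains the classical pattern 3412. -/
def Contains3412 {n : ℕ} (π : Equiv.Perm (Fin n)) : Prop :=
  ∃ i₁ i₂ i₃ i₄ : Fin n, i₁ < i₂ ∧ i₂ < i₃ ∧ i₃ < i₄ ∧
    π i₃ < π i₄ ∧ π i₄ < π i₁ ∧ π i₁ < π i₂

/-- `π` contains the vincular pattern 1-2̲3̲. -/
def Contains1_23 {n : ℕ} (π : Equiv.Perm (Fin n)) : Prop :=
  ∃ i j k : Fin n, i < j ∧ (j : ℕ) + 1 = (k : ℕ) ∧ π i < π j ∧ π j < π k

/-- `π` contains the vincular pattern 1-3̲2̲. -/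
def Contains1_32 {n : ℕ} (π : Equiv.Perm (Fin n)) : Prop :=
  ∃ i j k : Fin n, i < j ∧ (j : ℕ) + 1 = (k : ℕ) ∧ π i < π k ∧ π k < π j

/-- `w` is the one-line notation of a permutation of `{0, …, n-1}`. -/
def IsPermWord (n : ℕ) (w : List ℕ) : Prop :=
  List.Perm w (List.range n)

/-- Position `p` starts an ascending run of the word `w`. -/
def wRunStart (w : List ℕ) (p : ℕ) : Prop :=
  p = 0 ∨ w.getD p 0 < w.getD (p - 1) 0

/-- Position `p` ends an ascending run of the word `w`. -/
def wRunEnd (w : List ℕ) (p : ℕ) : Prop :=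
  p + 1 = w.length ∨ w.getD (p + 1) 0 < w.getD p 0

/-- The step of `Γ(w)` associated with the value `v`. -/
def wGammaStep (w : List ℕ) (v : ℕ) : CStep :=
  if wRunStart w (w.idxOf v) then
    if wRunEnd w (w.idxOf v) then CStep.H else CStep.U
  else
    if wRunEnd w (w.idxOf v) then CStep.D else CStep.Ht

/-- The label of `Γ(w)` at the value `v`. -/
def wGammaLabel (w : List ℕ) (v : ℕ) : ℕ :=
  ((Finset.range w.length ×ˢ Finset.range w.length).filter fun pq =>
    wRunStart w pq.1 ∧ wRunEnd w pq.2 ∧ pq.1 ≤ pq.2 ∧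
    (∀ r, pq.1 ≤ r → r < pq.2 → ¬ wRunEnd w r) ∧
    w.getD pq.1 0 < v ∧ v < w.getD pq.2 0 ∧ pq.2 < w.idxOf v).card

/-- The map `Γ` on one-line words. -/
def wGamma (w : List ℕ) : List CStep × List ℕ :=
  ((List.range w.length).map (wGammaStep w), (List.range w.length).map (wGammaLabel w))

/-- The word `w` contains the vincular pattern 1-2̲3̲. -/
def wContains1_23 (w : List ℕ) : Prop :=
  ∃ i j, i < j ∧ j + 1 < w.length ∧
    w.getD i 0 < w.getD j 0 ∧ w.getD j 0 < w.getD (j + 1) 0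

/-- The word `w` contains the vincular pattern 1-3̲2̲. -/
def wContains1_32 (w : List ℕ) : Prop :=
  ∃ i j, i < j ∧ j + 1 < w.length ∧
    w.getD i 0 < w.getD (j + 1) 0 ∧ w.getD (j + 1) 0 < w.getD j 0

/-- The word `w` contains the classical pattern 132. -/
def wContains132 (w : List ℕ) : Prop :=
  ∃ i j k, i < j ∧ j < k ∧ k < w.length ∧
    w.getD i 0 < w.getD k 0 ∧ w.getD k 0 < w.getD j 0

/-- The word `w` contains the consecutive pattern 123. -/
def wContainsC123 (w : List ℕ) : Prop :=
  ∃ i, i + 2 < w.length ∧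
    w.getD i 0 < w.getD (i + 1) 0 ∧ w.getD (i + 1) 0 < w.getD (i + 2) 0

/-- The one-line word of the Foata image `F(π)` of an involution `π`: write `π` in
standard cycle notation (each cycle with its least element first, cycles in
decreasing order of their least elements) and erase the parentheses. -/
def foataWord {n : ℕ} (π : Equiv.Perm (Fin n)) : List ℕ :=
  (((List.range n).reverse).map fun m =>
    if pv π m = m then [m]
    else if m < pv π m then [m, pv π m]
    else ([] : List ℕ)).flatten

/-- The number of long tunnels of `d`: occurrences of factors `U α D` with `α` a
nonempty Motzkin word. -/
def longTunnelCount (d : List Step) : ℕ :=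
  ((Finset.range d.length ×ˢ Finset.range d.length).filter fun ij =>
    ij.1 + 1 < ij.2 ∧ d.getD ij.1 Step.H = Step.U ∧ d.getD ij.2 Step.H = Step.D ∧
    IsMotzkin ((d.drop (ij.1 + 1)).take (ij.2 - ij.1 - 1))).card

/-- The number of weak valleys of `d`: occurrences of the factors `HH, HU, DH, DU`. -/
def weakValleyCount (d : List Step) : ℕ :=
  occFactor [Step.H, Step.H] d + occFactor [Step.H, Step.U] d +
  occFactor [Step.D, Step.H] d + occFactor [Step.D, Step.U] d

end

section AuxProof

variable {n : ℕ} (π : Equiv.Perm (Fin n))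

private lemma aux_not_runEnd {j : Fin n} (h : ¬ RunEndAt π j) :
    ∃ s : Fin n, (j : ℕ) + 1 = (s : ℕ) ∧ π j < π s := by
  unfold RunEndAt at h
  push_neg at h
  obtain ⟨s, hs, hle⟩ := h
  refine ⟨s, hs, lt_of_le_of_ne hle ?_⟩
  intro heq
  have : j = s := π.injective heq
  subst this
  omega

private lemma aux_not_runStart {j : Fin n} (h : ¬ RunStartAt π j) :
    ∃ s : Fin n, (s : ℕ) + 1 = (j : ℕ) ∧ π s < π j := by
  unfold RunStartAt at h
  push_neg at h
  obtain ⟨s, hs, hle⟩ := h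
  refine ⟨s, hs, lt_of_le_of_ne hle ?_⟩
  intro heq
  have : s = j := π.injective heq
  subst this
  omega

private lemma aux_runEnd_iff_runStart {r s : Fin n} (h : (r : ℕ) + 1 = (s : ℕ)) :
    RunEndAt π r ↔ RunStartAt π s := by
  constructor
  · intro he q hq
    have : q = r := Fin.ext (by omega)
    subst this
    exact he s h
  · intro hs q hq
    have : q = s := Fin.ext (by omega)
    subst this
    exact hs r h

private lemma aux_nextEnd (j : Fin n) :
    ∃ q : Fin n, j ≤ q ∧ RunEndAt π q ∧
      (∀ r : Fin n, j ≤ r → r ≤ q → π j ≤ π r) ∧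
      (∀ r : Fin n, j ≤ r → r < q → ¬ RunEndAt π r) := by
  obtain ⟨t, ht⟩ : ∃ t, n - 1 - (j : ℕ) = t := ⟨_, rfl⟩
  induction t generalizing j with
  | zero =>
    have hj : (j : ℕ) = n - 1 := by have := j.isLt; omega
    refine ⟨j, le_refl _, ?_, ?_, ?_⟩
    · intro q hq
      exfalso
      have := q.isLt
      omega
    · intro r h1 h2
      have : r = j := le_antisymm h2 h1
      subst this
      exact le_refl _
    · intro r h1 h2
      exact absurd (lt_of_le_of_lt h1 h2) (lt_irrefl _)
  | succ t ih =>
    by_cases he : RunEndAt π j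
    · refine ⟨j, le_refl _, he, ?_, ?_⟩
      · intro r h1 h2
        have : r = j := le_antisymm h2 h1
        subst this
        exact le_refl _
      · intro r h1 h2
        exact absurd (lt_of_le_of_lt h1 h2) (lt_irrefl _)
    · obtain ⟨s, hs, hlt⟩ := aux_not_runEnd π he
      have hst : n - 1 - (s : ℕ) = t := by have := s.isLt; omega
      obtain ⟨q, h1, h2, h3, h4⟩ := ih s hst
      have hjs : j < s := by rw [Fin.lt_def]; omega
      refine ⟨q, le_trans (le_of_lt hjs) h1, h2, ?_, ?_⟩
      · intro r hr1 hr2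
        rcases eq_or_lt_of_le hr1 with h | h
        · subst h; exact le_refl _
        · have hsr : s ≤ r := by rw [Fin.le_def]; rw [Fin.lt_def] at h; omega
          exact le_of_lt (lt_of_lt_of_le hlt (h3 r hsr hr2))
      · intro r hr1 hr2
        rcases eq_or_lt_of_le hr1 with h | h
        · subst h; exact he
        · have hsr : s ≤ r := by rw [Fin.le_def]; rw [Fin.lt_def] at h; omega
          exact h4 r hsr hr2

private lemma aux_prevStart (j : Fin n) :
    ∃ p : Fin n, p ≤ j ∧ RunStartAt π p ∧
      (∀ r : Fin n, p ≤ r → r ≤ j → π p ≤ π r) ∧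
      (∀ r : Fin n, p < r → r ≤ j → ¬ RunStartAt π r) := by
  obtain ⟨t, ht⟩ : ∃ t, (j : ℕ) = t := ⟨_, rfl⟩
  induction t generalizing j with
  | zero =>
    refine ⟨j, le_refl _, ?_, ?_, ?_⟩
    · intro q hq; exfalso; omega
    · intro r h1 h2
      have : r = j := le_antisymm h2 h1
      subst this
      exact le_refl _
    · intro r h1 h2
      exact absurd (lt_of_lt_of_le h1 h2) (lt_irrefl _)
  | succ t ih =>
    by_cases hs : RunStartAt π j
    · refine ⟨j, le_refl _, hs, ?_, ?_⟩
      · intro r h1 h2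
        have : r = j := le_antisymm h2 h1
        subst this
        exact le_refl _
      · intro r h1 h2
        exact absurd (lt_of_lt_of_le h1 h2) (lt_irrefl _)
    · obtain ⟨s, hsj, hlt⟩ := aux_not_runStart π hs
      have hst : (s : ℕ) = t := by omega
      obtain ⟨p, h1, h2, h3, h4⟩ := ih s hst
      have hsj' : s < j := by rw [Fin.lt_def]; omega
      refine ⟨p, le_trans h1 (le_of_lt hsj'), h2, ?_, ?_⟩
      · intro r hr1 hr2
        rcases eq_or_lt_of_le hr2 with h | h
        · subst h; exact le_of_lt (lt_of_le_of_lt (h3 s h1 (le_refl _)) hlt)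
        · have hrs : r ≤ s := by rw [Fin.le_def]; rw [Fin.lt_def] at h; omega
          exact h3 r hr1 hrs
      · intro r hr1 hr2
        rcases eq_or_lt_of_le hr2 with h | h
        · subst h; exact hs
        · have hrs : r ≤ s := by rw [Fin.le_def]; rw [Fin.lt_def] at h; omega
          exact h4 r hr1 hrs

private lemma aux_key :
    ∀ m : ℕ, ∀ j i k : Fin n, (j : ℕ) ≤ m → i < j → j < k → π i < π k → π k < π j →
      ∃ p q : Fin n, RunStartAt π p ∧ RunEndAt π q ∧ p ≤ q ∧
        (∀ r : Fin n, p ≤ r → r < q → ¬ RunEndAt π r) ∧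
        π p < π k ∧ π k < π q ∧ q < k := by
  intro m
  induction m with
  | zero =>
    intro j i k hm hij _ _ _
    exfalso
    rw [Fin.lt_def] at hij
    omega
  | succ m ih =>
    intro j i k hm hij hjk hik hkj
    obtain ⟨q0, hq1, hq2, hq3, hq4⟩ := aux_nextEnd π j
    obtain ⟨p0, hp1, hp2, hp3, hp4⟩ := aux_prevStart π j
    have hq0k : q0 < k := by
      by_contra h
      push_neg at h
      exact absurd (hq3 k (le_of_lt hjk) h) (not_le.mpr hkj)
    have hnoend : ∀ r : Fin n, p0 ≤ r → r < q0 → ¬ RunEndAt π r := by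
      intro r h1 h2 hre
      by_cases hrj : j ≤ r
      · exact hq4 r hrj h2 hre
      · push_neg at hrj
        have hr1 : (r : ℕ) + 1 < n := by
          have := j.isLt
          rw [Fin.lt_def] at hrj
          omega
        have hrs : RunStartAt π ⟨(r : ℕ) + 1, hr1⟩ :=
          (aux_runEnd_iff_runStart π rfl).mp hre
        refine hp4 ⟨(r : ℕ) + 1, hr1⟩ ?_ ?_ hrs
        · rw [Fin.lt_def]
          rw [Fin.le_def] at h1
          simp only []
          omega
        · rw [Fin.le_def]
          rw [Fin.lt_def] at hrj
          simp only []
          omega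
    by_cases hpk : π p0 < π k
    · exact ⟨p0, q0, hp2, hq2, le_trans hp1 hq1, hnoend, hpk,
        lt_of_lt_of_le hkj (hq3 q0 hq1 (le_refl _)), hq0k⟩
    · have hkp : π k < π p0 := by
        rcases lt_or_eq_of_le (not_lt.mp hpk) with h | h
        · exact h
        · exfalso
          have : k = p0 := π.injective h
          subst this
          exact absurd (lt_of_le_of_lt hp1 hjk) (lt_irrefl _)
      have hip : i < p0 := by
        by_contra h
        push_neg at h
        exact absurd (lt_trans hik (lt_of_lt_of_le hkp (hp3 i h (le_of_lt hij))))
          (lt_irrefl _)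
      have hp0pos : 0 < (p0 : ℕ) := by
        rw [Fin.lt_def] at hip
        omega
      have hj2lt : (p0 : ℕ) - 1 < n := by have := p0.isLt; omega
      set j2 : Fin n := ⟨(p0 : ℕ) - 1, hj2lt⟩ with hj2def
      have hj2 : (j2 : ℕ) + 1 = (p0 : ℕ) := by simp [hj2def]; omega
      have hlt2 : π p0 < π j2 := hp2 j2 hj2
      have hkj2 : π k < π j2 := lt_trans hkp hlt2
      have hij2 : i < j2 := by
        rw [Fin.lt_def] at hip ⊢
        simp only [hj2def]
        rcases Nat.lt_or_ge (i : ℕ) ((p0 : ℕ) - 1) with h | h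
        · exact h
        · exfalso
          have : i = j2 := Fin.ext (by simp [hj2def]; omega)
          subst this
          exact absurd (lt_trans hik hkj2) (lt_irrefl _)
      have hj2k : j2 < k := by
        rw [Fin.lt_def] at hjk ⊢
        rw [Fin.le_def] at hp1
        simp only [hj2def]
        omega
      have hj2m : (j2 : ℕ) ≤ m := by
        rw [Fin.le_def] at hp1
        simp only [hj2def]
        omega
      exact ih j2 i k hj2m hij2 hj2k hik hkj2

end AuxProof

/-- For `π ∈ S_n` with `Γ(π) = (d, l)`: `π` avoids the classical
pattern 132 if and only if all the labels are `0`. -/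
theorem avoids132_iff_labels_zero (n : ℕ) (π : Equiv.Perm (Fin n)) :
    ¬ Contains132 π ↔ ∀ v : Fin n, gammaLabel π v = 0 := by
  constructor
  · intro hav v
    unfold gammaLabel
    rw [Finset.card_eq_zero, Finset.filter_eq_empty_iff]
    rintro ⟨p, q⟩ -
    rintro ⟨hs, he, hpq, hno, h1, h2, h3⟩
    dsimp only at hs he hpq hno h1 h2 h3
    apply hav
    have hpk : p < q := by
      rcases lt_or_eq_of_le hpq with h | h
      · exact h
      · exfalso; subst h; exact absurd (lt_trans h1 h2) (lt_irrefl _)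
    refine ⟨p, q, π.symm v, hpk, h3, ?_, ?_⟩
    · rw [Equiv.apply_symm_apply]; exact h1
    · rw [Equiv.apply_symm_apply]; exact h2
  · rintro hz ⟨i, j, k, hij, hjk, h1, h2⟩
    obtain ⟨p, q, c1, c2, c3, c4, c5, c6, c7⟩ :=
      aux_key π (j : ℕ) j i k (le_refl _) hij hjk h1 h2
    have hcard := hz (π k)
    unfold gammaLabel at hcard
    rw [Finset.card_eq_zero, Finset.filter_eq_empty_iff] at hcard
    exact hcard (Finset.mem_univ (p, q))
      ⟨c1, c2, c3, c4, c5, c6, by simpa using c7⟩
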